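/- For one step after the encoding: F̃(τ̃(α))(2x) = p_C(φ̂(α(x))) + p_R(φ̌(α(x−1))) and F̃(τ̃(α))(2x+1) = p_C(φ̌(α(x))) + p_R(φ̂(α(x))); consequently, after this step, (F̃(τ̃(α))(2x), F̃(τ̃(α))(2x+1)) ∈ B_C and (F̃(τ̃(α))(2x−1), F̃(τ̃(α))(2x)) ∈ B_R for all x ∈ ℤ. -/
import Mathlib


open scoped Classical

noncomputable section

/-- Heavy-particle part of a state: `p_C(q) = 2·sR·(q / (2·sR))`. -/
def pC (sR q : ℕ) : ℕ := 2 * sR * (q / (2 * sR))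

/-- Light-particle part of a state: `p_R(q) = q mod (2·sR)`. -/
def pR (sR q : ℕ) : ℕ := q % (2 * sR)

/-- All heavy particles `C̃ = {2k·sR : 0 ≤ k ≤ 2sC−1}`. -/
def Ctil (sC sR : ℕ) : Set ℕ := {c | ∃ k < 2 * sC, c = 2 * k * sR}

/-- All light particles `R̃ = {0,…,2sR−1}`. -/
def Rtil (sR : ℕ) : Set ℕ := {r | r < 2 * sR}

/-- `Ĉ = {2k·sR : 0 ≤ k ≤ sC−1}`. -/
def Chat (sC sR : ℕ) : Set ℕ := {c | ∃ k < sC, c = 2 * k * sR}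

/-- `Č = {2(k+sC)·sR : 0 ≤ k ≤ sC−1}`. -/
def Ccheck (sC sR : ℕ) : Set ℕ := {c | ∃ k < sC, c = 2 * (k + sC) * sR}

/-- `R̂ = {0,…,sR−1}`. -/
def Rhat (sR : ℕ) : Set ℕ := {r | r < sR}

/-- `Ř = {sR,…,2sR−1}`. -/
def Rcheck (sR : ℕ) : Set ℕ := {r | sR ≤ r ∧ r < 2 * sR}

/-- Balanced pair of states w.r.t. heavy particles. -/
def BC (sC sR q1 q2 : ℕ) : Prop :=
  pC sR q1 ∈ Chat sC sR ∧ pC sR q2 ∈ Ccheck sC sR ∧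
    pC sR q1 + pC sR q2 = 2 * (2 * sC - 1) * sR

/-- Balanced pair of states w.r.t. light particles. -/
def BR (sR q1 q2 : ℕ) : Prop :=
  pR sR q1 ∈ Rhat sR ∧ pR sR q2 ∈ Rcheck sR ∧
    pR sR q1 + pR sR q2 = 2 * sR - 1

/-- `φ̂_C : C → Ĉ` built from an arbitrary bijection `φC` of `C = Fin sC`. -/
def phatC (sC sR : ℕ) (φC : Fin sC ≃ Fin sC) (c : Fin sC) : ℕ := 2 * (φC c : ℕ) * sR

/-- `φ̂_R : R → R̂` built from an arbitrary bijection `φR` of `R = Fin sR`. -/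
def phatR (sR : ℕ) (φR : Fin sR ≃ Fin sR) (r : Fin sR) : ℕ := (φR r : ℕ)

/-- `φ̌_C(c) = 2(2sC−1)sR − φ̂_C(c)`. -/
def pcheckC (sC sR : ℕ) (φC : Fin sC ≃ Fin sC) (c : Fin sC) : ℕ :=
  2 * (2 * sC - 1) * sR - phatC sC sR φC c

/-- `φ̌_R(r) = 2sR−1 − φ̂_R(r)`. -/
def pcheckR (sR : ℕ) (φR : Fin sR ≃ Fin sR) (r : Fin sR) : ℕ :=
  2 * sR - 1 - phatR sR φR r

/-- `φ̂(c,r) = φ̂_C(c) + φ̂_R(r)`. -/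
def phat (sC sR : ℕ) (φC : Fin sC ≃ Fin sC) (φR : Fin sR ≃ Fin sR)
    (q : Fin sC × Fin sR) : ℕ := phatC sC sR φC q.1 + phatR sR φR q.2

/-- `φ̌(c,r) = φ̌_C(c) + φ̌_R(r)`. -/
def pcheck (sC sR : ℕ) (φC : Fin sC ≃ Fin sC) (φR : Fin sR ≃ Fin sR)
    (q : Fin sC × Fin sR) : ℕ := pcheckC sC sR φC q.1 + pcheckR sR φR q.2

/-- `Q̂ = {ĉ + r̂ : ĉ ∈ Ĉ, r̂ ∈ R̂}`. -/
def Qhat (sC sR : ℕ) : Set ℕ := {q | ∃ c ∈ Chat sC sR, ∃ r ∈ Rhat sR, q = c + r}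

/-- `Q̌ = {č + ř : č ∈ Č, ř ∈ Ř}`. -/
def Qcheck (sC sR : ℕ) : Set ℕ := {q | ∃ c ∈ Ccheck sC sR, ∃ r ∈ Rcheck sR, q = c + r}

/-- `φ̂_C⁻¹` applied to a heavy particle (given as a natural number). -/
def decC (sC sR : ℕ) [NeZero sC] (φC : Fin sC ≃ Fin sC) (c : ℕ) : Fin sC :=
  φC.symm ⟨(c / (2 * sR)) % sC, Nat.mod_lt _ (Nat.pos_of_ne_zero (NeZero.ne sC))⟩

/-- `φ̂_R⁻¹` applied to a light particle (given as a natural number). -/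
def decR (sR : ℕ) [NeZero sR] (φR : Fin sR ≃ Fin sR) (r : ℕ) : Fin sR :=
  φR.symm ⟨r % sR, Nat.mod_lt _ (Nat.pos_of_ne_zero (NeZero.ne sR))⟩

/-- The three-case local function `f̃` of the 4-neighbor RNCCA `A`. -/
def ftil (sC sR : ℕ) [NeZero sC] [NeZero sR] (φC : Fin sC ≃ Fin sC) (φR : Fin sR ≃ Fin sR)
    (f : Fin sC × Fin sR → Fin sC × Fin sR) (qm2 qm1 q0 q1 : ℕ) : ℕ :=
  if BR sR qm1 q0 ∧ BC sC sR q0 q1 then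
    phat sC sR φC φR (f (decC sC sR φC (pC sR q0), decR sR φR (pR sR qm1)))
  else if BR sR qm2 qm1 ∧ BC sC sR qm1 q0 then
    pcheck sC sR φC φR (f (decC sC sR φC (pC sR qm1), decR sR φR (pR sR qm2)))
  else pC sR q0 + pR sR qm1

/-- Global function `F̃` of `A` with neighborhood `(−2,−1,0,1)`. -/
def Ftil (sC sR : ℕ) [NeZero sC] [NeZero sR] (φC : Fin sC ≃ Fin sC) (φR : Fin sR ≃ Fin sR)
    (f : Fin sC × Fin sR → Fin sC × Fin sR) (α : ℤ → ℕ) (x : ℤ) : ℕ :=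
  ftil sC sR φC φR f (α (x - 2)) (α (x - 1)) (α x) (α (x + 1))

/-- The encoding `τ̃`: `τ̃(α)(2x) = φ̂(α(x))`, `τ̃(α)(2x+1) = φ̌(α(x))`. -/
def tenc (sC sR : ℕ) (φC : Fin sC ≃ Fin sC) (φR : Fin sR ≃ Fin sR)
    (α : ℤ → Fin sC × Fin sR) (y : ℤ) : ℕ :=
  if Even y then phat sC sR φC φR (α (y / 2)) else pcheck sC sR φC φR (α ((y - 1) / 2))

/-- Global function of the 2-neighbor PCA `P` with neighborhood `(0,−1)`. -/
def FP {C R : Type*} (f : C × R → C × R) (α : ℤ → C × R) (x : ℤ) : C × R :=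
  f ((α x).1, (α (x - 1)).2)

end

section Helpers

variable (sC sR : ℕ) (φC : Fin sC ≃ Fin sC) (φR : Fin sR ≃ Fin sR)

lemma pC_formula (m a : ℕ) (hsR : 0 < sR) (ha : a < 2 * sR) :
    pC sR (2 * sR * m + a) = 2 * sR * m := by
  have h2 : 0 < 2 * sR := by omega
  unfold pC
  rw [Nat.mul_add_div h2, Nat.div_eq_of_lt ha]
  ring

lemma pR_formula (m a : ℕ) (ha : a < 2 * sR) :
    pR sR (2 * sR * m + a) = a := by
  unfold pR
  rw [Nat.mul_add_mod, Nat.mod_eq_of_lt ha]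

lemma phat_form (q : Fin sC × Fin sR) :
    phat sC sR φC φR q = 2 * sR * (φC q.1 : ℕ) + (φR q.2 : ℕ) := by
  unfold phat phatC phatR; ring

lemma pcheck_form (q : Fin sC × Fin sR) :
    pcheck sC sR φC φR q =
      2 * sR * (2 * sC - 1 - (φC q.1 : ℕ)) + (2 * sR - 1 - (φR q.2 : ℕ)) := by
  have hc : (φC q.1 : ℕ) < sC := (φC q.1).isLt
  unfold pcheck pcheckC pcheckR phatC phatR
  have ha : 2 * sR * (2 * sC - 1) = 2 * (2 * sC - 1) * sR := by ring
  have hb : 2 * sR * (φC q.1 : ℕ) = 2 * (φC q.1 : ℕ) * sR := by ring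
  have h1 := Nat.mul_sub (2 * sR) (2 * sC - 1) (φC q.1 : ℕ)
  omega

lemma pC_phat (hsR : 0 < sR) (q : Fin sC × Fin sR) :
    pC sR (phat sC sR φC φR q) = 2 * sR * (φC q.1 : ℕ) := by
  rw [phat_form]
  exact pC_formula sR _ _ hsR (by have := (φR q.2).isLt; omega)

lemma pR_phat (q : Fin sC × Fin sR) :
    pR sR (phat sC sR φC φR q) = (φR q.2 : ℕ) := by
  rw [phat_form]
  exact pR_formula sR _ _ (by have := (φR q.2).isLt; omega)

lemma pC_pcheck (hsR : 0 < sR) (q : Fin sC × Fin sR) :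
    pC sR (pcheck sC sR φC φR q) = 2 * sR * (2 * sC - 1 - (φC q.1 : ℕ)) := by
  rw [pcheck_form]
  exact pC_formula sR _ _ hsR (by have := (φR q.2).isLt; omega)

lemma pR_pcheck (q : Fin sC × Fin sR) :
    pR sR (pcheck sC sR φC φR q) = 2 * sR - 1 - (φR q.2 : ℕ) := by
  rw [pcheck_form]
  exact pR_formula sR _ _ (by have := (φR q.2).isLt; omega)

lemma not_BR_pcheck (hsR : 0 < sR) (q : Fin sC × Fin sR) (b : ℕ) :
    ¬ BR sR (pcheck sC sR φC φR q) b := by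
  intro ⟨h1, _, _⟩
  rw [pR_pcheck] at h1
  have := (φR q.2).isLt
  simp only [Rhat, Set.mem_setOf_eq] at h1
  omega

lemma not_BC_pcheck (hsC : 0 < sC) (hsR : 0 < sR) (q : Fin sC × Fin sR) (b : ℕ) :
    ¬ BC sC sR (pcheck sC sR φC φR q) b := by
  intro ⟨h1, _, _⟩
  rw [pC_pcheck sC sR φC φR hsR] at h1
  obtain ⟨k, hk, hke⟩ := h1
  have hc : (φC q.1 : ℕ) < sC := (φC q.1).isLt
  have h2 : 2 * sR * (2 * sC - 1 - (φC q.1 : ℕ)) = 2 * sR * k := by rw [hke]; ring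
  have hkk := Nat.eq_of_mul_eq_mul_left (show 0 < 2 * sR by omega) h2
  omega

lemma tenc_even (α : ℤ → Fin sC × Fin sR) (x : ℤ) :
    tenc sC sR φC φR α (2 * x) = phat sC sR φC φR (α x) := by
  unfold tenc
  rw [if_pos ⟨x, by ring⟩, Int.mul_ediv_cancel_left x (by norm_num)]

lemma tenc_odd (α : ℤ → Fin sC × Fin sR) (x : ℤ) :
    tenc sC sR φC φR α (2 * x + 1) = pcheck sC sR φC φR (α x) := by
  unfold tenc
  rw [if_neg (by rw [Int.even_iff]; omega)]
  norm_num [Int.mul_ediv_cancel_left x (show (2:ℤ) ≠ 0 by norm_num)]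

lemma step_odd [NeZero sC] [NeZero sR] (f : Fin sC × Fin sR → Fin sC × Fin sR)
    (α : ℤ → Fin sC × Fin sR) (x : ℤ) :
    Ftil sC sR φC φR f (tenc sC sR φC φR α) (2 * x + 1) =
      pC sR (pcheck sC sR φC φR (α x)) + pR sR (phat sC sR φC φR (α x)) := by
  have hsC : 0 < sC := Nat.pos_of_ne_zero (NeZero.ne sC)
  have hsR : 0 < sR := Nat.pos_of_ne_zero (NeZero.ne sR)
  unfold Ftil
  have e1 : 2 * x + 1 - 2 = 2 * (x - 1) + 1 := by ring
  have e2 : 2 * x + 1 - 1 = 2 * x := by ring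
  have e3 : 2 * x + 1 + 1 = 2 * (x + 1) := by ring
  rw [e1, e2, e3, tenc_even, tenc_even, tenc_odd, tenc_odd]
  unfold ftil
  rw [if_neg (fun h => not_BC_pcheck sC sR φC φR hsC hsR (α x) _ h.2),
    if_neg (fun h => not_BR_pcheck sC sR φC φR hsR (α (x - 1)) _ h.1)]

lemma step_even [NeZero sC] [NeZero sR] (f : Fin sC × Fin sR → Fin sC × Fin sR)
    (α : ℤ → Fin sC × Fin sR) (x : ℤ) :
    Ftil sC sR φC φR f (tenc sC sR φC φR α) (2 * x) =
      pC sR (phat sC sR φC φR (α x)) + pR sR (pcheck sC sR φC φR (α (x - 1))) := by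
  have hsC : 0 < sC := Nat.pos_of_ne_zero (NeZero.ne sC)
  have hsR : 0 < sR := Nat.pos_of_ne_zero (NeZero.ne sR)
  unfold Ftil
  have e1 : 2 * x - 2 = 2 * (x - 1) := by ring
  have e2 : 2 * x - 1 = 2 * (x - 1) + 1 := by ring
  rw [e1, e2, tenc_even, tenc_even, tenc_odd, tenc_odd]
  unfold ftil
  rw [if_neg (fun h => not_BR_pcheck sC sR φC φR hsR (α (x - 1)) _ h.1),
    if_neg (fun h => not_BC_pcheck sC sR φC φR hsC hsR (α (x - 1)) _ h.2)]

end Helpers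

theorem stmt14 (sC sR : ℕ) [NeZero sC] [NeZero sR] (φC : Fin sC ≃ Fin sC)
    (φR : Fin sR ≃ Fin sR) (f : Fin sC × Fin sR → Fin sC × Fin sR)
    (hf : Function.Injective f) (α : ℤ → Fin sC × Fin sR) (x : ℤ) :
    Ftil sC sR φC φR f (tenc sC sR φC φR α) (2 * x) =
      pC sR (phat sC sR φC φR (α x)) + pR sR (pcheck sC sR φC φR (α (x - 1))) ∧
    Ftil sC sR φC φR f (tenc sC sR φC φR α) (2 * x + 1) =
      pC sR (pcheck sC sR φC φR (α x)) + pR sR (phat sC sR φC φR (α x)) ∧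
    BC sC sR (Ftil sC sR φC φR f (tenc sC sR φC φR α) (2 * x))
      (Ftil sC sR φC φR f (tenc sC sR φC φR α) (2 * x + 1)) ∧
    BR sR (Ftil sC sR φC φR f (tenc sC sR φC φR α) (2 * x - 1))
      (Ftil sC sR φC φR f (tenc sC sR φC φR α) (2 * x)) := by
  have hsC : 0 < sC := Nat.pos_of_ne_zero (NeZero.ne sC)
  have hsR : 0 < sR := Nat.pos_of_ne_zero (NeZero.ne sR)
  have h0 := step_even sC sR φC φR f α x
  have h1 := step_odd sC sR φC φR f α x
  have hm1 : Ftil sC sR φC φR f (tenc sC sR φC φR α) (2 * x - 1) =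
      pC sR (pcheck sC sR φC φR (α (x - 1))) + pR sR (phat sC sR φC φR (α (x - 1))) := by
    have : 2 * x - 1 = 2 * (x - 1) + 1 := by ring
    rw [this]; exact step_odd sC sR φC φR f α (x - 1)
  refine ⟨h0, h1, ?_, ?_⟩
  · rw [h0, h1, pC_phat sC sR φC φR hsR, pR_pcheck sC sR φC φR,
      pC_pcheck sC sR φC φR hsR, pR_phat sC sR φC φR]
    have hc : (φC (α x).1 : ℕ) < sC := (φC (α x).1).isLt
    have hr : (φR (α (x-1)).2 : ℕ) < sR := (φR (α (x-1)).2).isLt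
    have hr2 : (φR (α x).2 : ℕ) < sR := (φR (α x).2).isLt
    have e1 : pC sR (2 * sR * (φC (α x).1 : ℕ) + (2 * sR - 1 - (φR (α (x-1)).2 : ℕ)))
        = 2 * sR * (φC (α x).1 : ℕ) := pC_formula sR _ _ hsR (by omega)
    have e2 : pC sR (2 * sR * (2 * sC - 1 - (φC (α x).1 : ℕ)) + (φR (α x).2 : ℕ))
        = 2 * sR * (2 * sC - 1 - (φC (α x).1 : ℕ)) := pC_formula sR _ _ hsR (by omega)
    refine ⟨?_, ?_, ?_⟩
    · rw [e1]; exact ⟨(φC (α x).1 : ℕ), hc, by ring⟩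
    · rw [e2]
      refine ⟨sC - 1 - (φC (α x).1 : ℕ), by omega, ?_⟩
      have hE : sC - 1 - (φC (α x).1 : ℕ) + sC = 2 * sC - 1 - (φC (α x).1 : ℕ) := by omega
      rw [hE]; ring
    · rw [e1, e2, ← Nat.mul_add]
      have hS : (φC (α x).1 : ℕ) + (2 * sC - 1 - (φC (α x).1 : ℕ)) = 2 * sC - 1 := by omega
      rw [hS]; ring
  · rw [h0, hm1, pC_phat sC sR φC φR hsR, pR_pcheck sC sR φC φR,
      pC_pcheck sC sR φC φR hsR, pR_phat sC sR φC φR]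
    have hr : (φR (α (x-1)).2 : ℕ) < sR := (φR (α (x-1)).2).isLt
    have e1 : pR sR (2 * sR * (2 * sC - 1 - (φC (α (x-1)).1 : ℕ)) + (φR (α (x-1)).2 : ℕ))
        = (φR (α (x-1)).2 : ℕ) := pR_formula sR _ _ (by omega)
    have e2 : pR sR (2 * sR * (φC (α x).1 : ℕ) + (2 * sR - 1 - (φR (α (x-1)).2 : ℕ)))
        = 2 * sR - 1 - (φR (α (x-1)).2 : ℕ) := pR_formula sR _ _ (by omega)
    refine ⟨?_, ?_, ?_⟩
    · rw [e1]; exact hr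
    · rw [e2]; exact ⟨by omega, by omega⟩
    · rw [e1, e2]; omega
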